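/- Let $G_1, \ldots, G_m$ and $E_1, \ldots, E_m$ be finite sets of nonzero reals with $E_k \cap G_k = \varnothing$, $\#E_k > c\, \#G_k$ for each $k$ (for a constant $c > 0$), and suppose the sets $A_k = E_k \cup G_k$ satisfy $\max A_{k+1} \le \frac14 d(A_k)$ for $1 \le k < m$. Set $G = G_1 + \cdots + G_m$, $F_k = \sum_{i \ne k} G_i + E_k$, and $E = \bigcup_{k=1}^m F_k$. Then $\#E \ge m\, c\, \#G$. -/

import Mathlib

/-- Minimal gap of a finite set: min distance between distinct points if `2 ≤ card`,
and `|x|` for a singleton `{x}`. -/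
noncomputable def dGap (A : Finset ℝ) : ℝ :=
  if 2 ≤ A.card then sInf {r : ℝ | ∃ x ∈ A, ∃ y ∈ A, x ≠ y ∧ r = |x - y|}
  else sInf {r : ℝ | ∃ x ∈ A, r = |x|}

/-- `max A = max_{a ∈ A} |a|`. -/
noncomputable def maxAbs (A : Finset ℝ) : ℝ := sSup {r : ℝ | ∃ x ∈ A, r = |x|}




lemma abs_le_maxAbs {A : Finset ℝ} {x : ℝ} (hx : x ∈ A) : |x| ≤ maxAbs A := by
  have hset : {r : ℝ | ∃ x ∈ A, r = |x|} = ↑(A.image abs) := by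
    ext r; simp [eq_comm]
  apply le_csSup
  · rw [hset]
    exact (A.image abs).finite_toSet.bddAbove
  · exact ⟨x, hx, rfl⟩

lemma maxAbs_nonneg {A : Finset ℝ} (h : A.Nonempty) : 0 ≤ maxAbs A := by
  obtain ⟨x, hx⟩ := h
  exact le_trans (abs_nonneg x) (abs_le_maxAbs hx)

lemma gapset_eq (A : Finset ℝ) : {r : ℝ | ∃ x ∈ A, ∃ y ∈ A, x ≠ y ∧ r = |x - y|} =
    ↑(((A ×ˢ A).filter (fun p => p.1 ≠ p.2)).image (fun p => |p.1 - p.2|)) := by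
  ext r
  simp only [Set.mem_setOf_eq, Finset.coe_image, Set.mem_image, Finset.mem_coe,
    Finset.mem_filter, Finset.mem_product]
  constructor
  · rintro ⟨x, hx, y, hy, hxy, rfl⟩; exact ⟨(x, y), ⟨⟨hx, hy⟩, hxy⟩, rfl⟩
  · rintro ⟨⟨x, y⟩, ⟨⟨hx, hy⟩, hxy⟩, rfl⟩; exact ⟨x, hx, y, hy, hxy, rfl⟩

lemma dGap_le_abs_sub {A : Finset ℝ} {x y : ℝ} (hx : x ∈ A) (hy : y ∈ A) (hxy : x ≠ y) :
    dGap A ≤ |x - y| := by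
  have h2 : 2 ≤ A.card := Finset.one_lt_card.mpr ⟨x, hx, y, hy, hxy⟩
  rw [dGap, if_pos h2]
  apply csInf_le
  · rw [gapset_eq]; exact (Finset.finite_toSet _).bddBelow
  · exact ⟨x, hx, y, hy, hxy, rfl⟩

lemma dGap_pos {A : Finset ℝ} (h2 : 2 ≤ A.card) : 0 < dGap A := by
  rw [dGap, if_pos h2]
  obtain ⟨x, hx, y, hy, hxy⟩ := Finset.one_lt_card.mp h2
  have hne : {r : ℝ | ∃ x ∈ A, ∃ y ∈ A, x ≠ y ∧ r = |x - y|}.Nonempty :=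
    ⟨|x - y|, x, hx, y, hy, hxy, rfl⟩
  have hfin : {r : ℝ | ∃ x ∈ A, ∃ y ∈ A, x ≠ y ∧ r = |x - y|}.Finite := by
    rw [gapset_eq]; exact Finset.finite_toSet _
  obtain ⟨a, ha, b, hb, hab, heq⟩ := hne.csInf_mem hfin
  rw [heq]
  exact abs_pos.mpr (sub_ne_zero.mpr hab)

lemma dGap_le_two_maxAbs {A : Finset ℝ} (hne : A.Nonempty) : dGap A ≤ 2 * maxAbs A := by
  by_cases h2 : 2 ≤ A.card
  · obtain ⟨x, hx, y, hy, hxy⟩ := Finset.one_lt_card.mp h2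
    calc dGap A ≤ |x - y| := dGap_le_abs_sub hx hy hxy
    _ ≤ |x| + |y| := abs_sub x y
    _ ≤ maxAbs A + maxAbs A := add_le_add (abs_le_maxAbs hx) (abs_le_maxAbs hy)
    _ = 2 * maxAbs A := by ring
  · obtain ⟨x, hx⟩ := hne
    have hA : A = {x} := by
      apply Finset.eq_singleton_iff_unique_mem.mpr
      refine ⟨hx, fun y hy => ?_⟩
      by_contra hxy
      exact h2 (Finset.one_lt_card.mpr ⟨y, hy, x, hx, hxy⟩)
    rw [dGap, if_neg h2, hA]
    have : {r : ℝ | ∃ z ∈ ({x} : Finset ℝ), r = |z|} = {|x|} := by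
      ext r; simp [eq_comm]
    rw [this, csInf_singleton]
    have := abs_le_maxAbs (A := {x}) (Finset.mem_singleton_self x)
    have h0 : 0 ≤ maxAbs ({x} : Finset ℝ) := le_trans (abs_nonneg x) this
    linarith

lemma sum_M_lt : ∀ (m : ℕ) (M : Fin (m+1) → ℝ), (∀ i, 0 < M i) →
    (∀ i : Fin (m+1), ∀ h : (i:ℕ)+1 < m+1, M ⟨(i:ℕ)+1, h⟩ ≤ M i / 2) →
    ∑ i, M i < 2 * M 0 := by
  intro m
  induction m with
  | zero =>
    intro M hpos _
    have hs : ∑ i, M i = M 0 := Fin.sum_univ_one M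
    have := hpos 0
    linarith
  | succ n ih =>
    intro M hpos hchain
    rw [Fin.sum_univ_succ]
    have htail : ∑ i : Fin (n+1), M i.succ < 2 * M (Fin.succ 0) := by
      apply ih
      · intro i; exact hpos i.succ
      · intro i h
        have h2 : ((i.succ : Fin (n+2)) : ℕ) + 1 < n + 2 := by
          simp [Fin.val_succ]; omega
        have := hchain i.succ h2
        convert this using 3 <;> simp [Fin.succ_mk, Fin.val_succ]
    have h1 : M (Fin.succ 0) ≤ M 0 / 2 := by
      have hlt : ((0 : Fin (n+2)) : ℕ) + 1 < n + 2 := by simp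
      have hh := hchain 0 hlt
      have harg : (⟨((0 : Fin (n+2)) : ℕ) + 1, hlt⟩ : Fin (n+2)) = Fin.succ 0 := by
        ext; simp
      rwa [harg] at hh
    linarith

lemma uniq_rep : ∀ (m : ℕ) (A : Fin m → Finset ℝ), (∀ i, ∀ x ∈ A i, x ≠ 0) →
    (∀ i : Fin m, ∀ h : (i:ℕ)+1 < m, maxAbs (A ⟨(i:ℕ)+1, h⟩) ≤ dGap (A i) / 4) →
    ∀ a b : Fin m → ℝ, (∀ i, a i ∈ A i) → (∀ i, b i ∈ A i) →
    ∑ i, a i = ∑ i, b i → a = b := by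
  intro m
  induction m with
  | zero => intro _ _ _ a b _ _ _; funext i; exact i.elim0
  | succ n ih =>
    intro A h0 hchain a b ha hb hsum
    have hM : ∀ i : Fin (n+1), 0 < maxAbs (A i) := by
      intro i
      have hai := ha i
      have := abs_le_maxAbs hai
      have := abs_pos.mpr (h0 i (a i) hai)
      linarith
    have key : a 0 = b 0 := by
      by_contra hne
      have h2 : 2 ≤ (A 0).card := Finset.one_lt_card.mpr ⟨a 0, ha 0, b 0, hb 0, hne⟩
      have hd : dGap (A 0) ≤ |a 0 - b 0| := dGap_le_abs_sub (ha 0) (hb 0) hne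
      have hdpos : 0 < dGap (A 0) := dGap_pos h2
      -- tail bound
      have hT : |∑ i : Fin n, (a i.succ - b i.succ)| < dGap (A 0) := by
        rcases Nat.eq_zero_or_pos n with hn | hn
        · subst hn; simpa using hdpos
        · obtain ⟨n', rfl⟩ := Nat.exists_eq_succ_of_ne_zero (Nat.pos_iff_ne_zero.mp hn)
          have hsumM : ∑ i : Fin (n'+1), maxAbs (A i.succ) < 2 * maxAbs (A (Fin.succ 0)) := by
            apply sum_M_lt
            · intro i; exact hM i.succ
            · intro i h
              have h2' : ((i.succ : Fin (n'+2)) : ℕ) + 1 < n' + 2 := by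
                simp [Fin.val_succ]; omega
              have hc := hchain i.succ h2'
              have hd2 : dGap (A i.succ) ≤ 2 * maxAbs (A i.succ) :=
                dGap_le_two_maxAbs ⟨a i.succ, ha i.succ⟩
              have : maxAbs (A ⟨(i.succ : ℕ)+1, h2'⟩) ≤ maxAbs (A i.succ) / 2 := by
                linarith
              convert this using 3 <;> simp [Fin.succ_mk, Fin.val_succ]
          have hM1 : maxAbs (A (Fin.succ 0)) ≤ dGap (A 0) / 4 := by
            have hlt : ((0 : Fin (n'+2)) : ℕ) + 1 < n' + 2 := by simp
            have hh := hchain 0 hlt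
            have harg : (⟨((0 : Fin (n'+2)) : ℕ) + 1, hlt⟩ : Fin (n'+2)) = Fin.succ 0 := by
              ext; simp
            rwa [harg] at hh
          calc |∑ i : Fin (n'+1), (a i.succ - b i.succ)|
              ≤ ∑ i : Fin (n'+1), |a i.succ - b i.succ| := Finset.abs_sum_le_sum_abs _ _
            _ ≤ ∑ i : Fin (n'+1), 2 * maxAbs (A i.succ) := by
                apply Finset.sum_le_sum
                intro i _
                have h1 := abs_le_maxAbs (ha i.succ)
                have h2 := abs_le_maxAbs (hb i.succ)
                calc |a i.succ - b i.succ| ≤ |a i.succ| + |b i.succ| := abs_sub _ _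
                  _ ≤ 2 * maxAbs (A i.succ) := by linarith
            _ = 2 * ∑ i : Fin (n'+1), maxAbs (A i.succ) := by rw [Finset.mul_sum]
            _ < 2 * (2 * maxAbs (A (Fin.succ 0))) := by linarith
            _ ≤ dGap (A 0) := by linarith
      have heq : a 0 - b 0 = -(∑ i : Fin n, (a i.succ - b i.succ)) := by
        have h1 : ∑ i : Fin (n+1), a i = a 0 + ∑ i : Fin n, a i.succ := Fin.sum_univ_succ a
        have h2 : ∑ i : Fin (n+1), b i = b 0 + ∑ i : Fin n, b i.succ := Fin.sum_univ_succ b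
        have h3 : ∑ i : Fin n, (a i.succ - b i.succ)
            = ∑ i : Fin n, a i.succ - ∑ i : Fin n, b i.succ := Finset.sum_sub_distrib _ _
        rw [h1, h2] at hsum
        rw [h3]; linarith
      rw [heq, abs_neg] at hd
      linarith
    have htail : (fun i : Fin n => a i.succ) = (fun i : Fin n => b i.succ) := by
      apply ih (fun i => A i.succ)
      · intro i; exact h0 i.succ
      · intro i h
        have h2' : ((i.succ : Fin (n+1)) : ℕ) + 1 < n + 1 := by
          simp [Fin.val_succ]; omega
        have := hchain i.succ h2'
        convert this using 3 <;> simp [Fin.succ_mk, Fin.val_succ]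
      · intro i; exact ha i.succ
      · intro i; exact hb i.succ
      · have h1 := Fin.sum_univ_succ a
        have h2 := Fin.sum_univ_succ b
        rw [h1, h2, key] at hsum
        linarith
    funext i
    induction i using Fin.cases with
    | zero => exact key
    | succ j => exact congrFun htail j

theorem stmt18 (m : ℕ) (E G : Fin m → Finset ℝ) (c : ℝ) (hc : 0 < c)
    (hE0 : ∀ k, ∀ a ∈ E k, a ≠ 0) (hG0 : ∀ k, ∀ a ∈ G k, a ≠ 0)
    (hdisj : ∀ k, Disjoint (E k) (G k))
    (hcard : ∀ k, c * ((G k).card : ℝ) < ((E k).card : ℝ))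
    (hmax : ∀ k : Fin m, ∀ h : (k : ℕ) + 1 < m,
      maxAbs (E ⟨(k : ℕ) + 1, h⟩ ∪ G ⟨(k : ℕ) + 1, h⟩) ≤ dGap (E k ∪ G k) / 4) :
    (m : ℝ) * c *
        ({z : ℝ | ∃ g : Fin m → ℝ, (∀ i, g i ∈ G i) ∧ z = ∑ i, g i}.ncard : ℝ)
      ≤ ((⋃ k : Fin m,
          {z : ℝ | ∃ g : Fin m → ℝ, (∀ i, i ≠ k → g i ∈ G i) ∧ g k ∈ E k ∧
            z = ∑ i, g i}).ncard : ℝ) := by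
  classical
  set A : Fin m → Finset ℝ := fun k => E k ∪ G k with hA
  have huniq : ∀ a b : Fin m → ℝ, (∀ i, a i ∈ A i) → (∀ i, b i ∈ A i) →
      ∑ i, a i = ∑ i, b i → a = b := by
    apply uniq_rep m A
    · intro i x hx
      rcases Finset.mem_union.mp hx with h | h
      exacts [hE0 i x h, hG0 i x h]
    · exact hmax
  by_cases hGne : ∀ k, (G k).Nonempty
  · -- main case
    set SGf : Finset ℝ := (Fintype.piFinset G).image (fun g => ∑ i, g i) with hSGf
    have hSGset : {z : ℝ | ∃ g : Fin m → ℝ, (∀ i, g i ∈ G i) ∧ z = ∑ i, g i} = ↑SGf := by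
      ext z
      simp only [hSGf, Finset.coe_image, Set.mem_image, Finset.mem_coe,
        Fintype.mem_piFinset, Set.mem_setOf_eq]
      constructor
      · rintro ⟨g, hg, rfl⟩; exact ⟨g, hg, rfl⟩
      · rintro ⟨g, hg, rfl⟩; exact ⟨g, hg, rfl⟩
    set tup : Fin m → Fin m → Finset ℝ := fun k i => if i = k then E k else G i with htup
    set Ff : Fin m → Finset ℝ :=
      fun k => (Fintype.piFinset (tup k)).image (fun g => ∑ i, g i) with hFf
    have htupmem : ∀ (k : Fin m) (g : Fin m → ℝ), g ∈ Fintype.piFinset (tup k) ↔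
        ((∀ i, i ≠ k → g i ∈ G i) ∧ g k ∈ E k) := by
      intro k g
      rw [Fintype.mem_piFinset]
      constructor
      · intro h
        refine ⟨fun i hi => ?_, ?_⟩
        · have := h i; simp only [htup, if_neg hi] at this; exact this
        · have := h k; simp only [htup] at this; simpa using this
      · rintro ⟨h1, h2⟩ i
        by_cases hi : i = k
        · subst hi; simp only [htup]; simpa using h2
        · simp only [htup, if_neg hi]; exact h1 i hi
    have hFset : ∀ k : Fin m,
        {z : ℝ | ∃ g : Fin m → ℝ, (∀ i, i ≠ k → g i ∈ G i) ∧ g k ∈ E k ∧ z = ∑ i, g i}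
          = ↑(Ff k) := by
      intro k
      ext z
      simp only [hFf, Finset.coe_image, Set.mem_image, Finset.mem_coe, Set.mem_setOf_eq]
      constructor
      · rintro ⟨g, h1, h2, rfl⟩; exact ⟨g, (htupmem k g).mpr ⟨h1, h2⟩, rfl⟩
      · rintro ⟨g, hg, rfl⟩
        obtain ⟨h1, h2⟩ := (htupmem k g).mp hg
        exact ⟨g, h1, h2, rfl⟩
    have hsubA : ∀ (k : Fin m) (g : Fin m → ℝ), g ∈ Fintype.piFinset (tup k) →
        ∀ i, g i ∈ A i := by
      intro k g hg i
      obtain ⟨h1, h2⟩ := (htupmem k g).mp hg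
      by_cases hi : i = k
      · subst hi; exact Finset.mem_union_left _ h2
      · exact Finset.mem_union_right _ (h1 i hi)
    -- injectivity
    have hinj : ∀ k : Fin m, Set.InjOn (fun g : Fin m → ℝ => ∑ i, g i)
        ↑(Fintype.piFinset (tup k)) := by
      intro k g hg g' hg' hsum
      exact huniq g g' (hsubA k g hg) (hsubA k g' hg') hsum
    have hFcard : ∀ k : Fin m, (Ff k).card = ∏ i, (tup k i).card := by
      intro k
      rw [hFf]
      rw [Finset.card_image_of_injOn (hinj k), Fintype.card_piFinset]
    -- disjointness
    have hFdisj : ∀ k ∈ (Finset.univ : Finset (Fin m)), ∀ l ∈ (Finset.univ : Finset (Fin m)),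
        k ≠ l → Disjoint (Ff k) (Ff l) := by
      intro k _ l _ hkl
      rw [Finset.disjoint_left]
      intro z hzk hzl
      rw [hFf, Finset.mem_image] at hzk hzl
      obtain ⟨g, hg, hgz⟩ := hzk
      obtain ⟨g', hg', hgz'⟩ := hzl
      have : g = g' := huniq g g' (hsubA k g hg) (hsubA l g' hg') (by rw [hgz, hgz'])
      subst this
      have h1 : g k ∈ E k := ((htupmem k g).mp hg).2
      have h2 : g k ∈ G k := ((htupmem l g).mp hg').1 k hkl
      exact Finset.disjoint_left.mp (hdisj k) h1 h2
    -- union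
    have hUnion : (⋃ k : Fin m,
        {z : ℝ | ∃ g : Fin m → ℝ, (∀ i, i ≠ k → g i ∈ G i) ∧ g k ∈ E k ∧ z = ∑ i, g i})
          = ↑(Finset.univ.biUnion Ff) := by
      rw [Set.iUnion_congr hFset]
      ext z
      simp
    rw [hSGset, hUnion, Set.ncard_coe_finset, Set.ncard_coe_finset,
      Finset.card_biUnion hFdisj]
    push_cast
    -- Step 2: per-k bound
    have hstep : ∀ k : Fin m, c * ∏ i, ((G i).card : ℝ) ≤ ((Ff k).card : ℝ) := by
      intro k
      have e1 : ∏ i, ((G i).card : ℝ)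
          = ((G k).card : ℝ) * ∏ i ∈ Finset.univ.erase k, ((G i).card : ℝ) :=
        (Finset.mul_prod_erase _ _ (Finset.mem_univ k)).symm
      have e2 : ((Ff k).card : ℝ)
          = ((E k).card : ℝ) * ∏ i ∈ Finset.univ.erase k, ((G i).card : ℝ) := by
        rw [hFcard k]
        push_cast
        rw [← Finset.mul_prod_erase _ _ (Finset.mem_univ k)]
        congr 1
        · simp [htup]
        · apply Finset.prod_congr rfl
          intro i hi
          simp only [htup, if_neg (Finset.ne_of_mem_erase hi)]
      have hP : 0 < ∏ i ∈ Finset.univ.erase k, ((G i).card : ℝ) := by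
        apply Finset.prod_pos
        intro i _
        exact_mod_cast Finset.card_pos.mpr (hGne i)
      rw [e1, e2, ← mul_assoc]
      have := hcard k
      nlinarith
    have hSGle : ((SGf).card : ℝ) ≤ ∏ i, ((G i).card : ℝ) := by
      rw [hSGf]
      have h1 : ((Fintype.piFinset G).image (fun g => ∑ i, g i)).card
          ≤ (Fintype.piFinset G).card := Finset.card_image_le
      rw [Fintype.card_piFinset] at h1
      exact_mod_cast h1
    calc (m : ℝ) * c * (SGf.card : ℝ) ≤ (m : ℝ) * c * ∏ i, ((G i).card : ℝ) := by
          apply mul_le_mul_of_nonneg_left hSGle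
          positivity
      _ = ∑ _k : Fin m, c * ∏ i, ((G i).card : ℝ) := by
          rw [Finset.sum_const, Finset.card_univ, Fintype.card_fin, nsmul_eq_mul]
          ring
      _ ≤ ∑ k : Fin m, ((Ff k).card : ℝ) := Finset.sum_le_sum (fun k _ => hstep k)
  · -- some G k empty
    push_neg at hGne
    obtain ⟨k0, hk0⟩ := hGne
    have hempty : {z : ℝ | ∃ g : Fin m → ℝ, (∀ i, g i ∈ G i) ∧ z = ∑ i, g i} = ∅ := by
      ext z
      simp only [Set.mem_setOf_eq, Set.mem_empty_iff_false, iff_false]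
      rintro ⟨g, hg, -⟩
      have := hg k0
      rw [hk0] at this
      exact absurd this (Finset.notMem_empty _)
    rw [hempty, Set.ncard_empty]
    push_cast
    rw [mul_zero]
    positivity
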